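/- Let G be a graph, a, b positive integers, and φ a proper (a:b)-coloring of G such that for any two distinct vertices v, w at least b colors appear exactly once on {v,w}. Then |φ(v) ∩ φ(w)| ≤ b/2 for all distinct v, w, and for any three vertices x, y, z with x adjacent to both y and z, |φ(x) ∪ φ(y) ∪ φ(z)| ≥ 5b/2. -/
import Mathlib


theorem stmt_18 {V : Type*} [DecidableEq V] (G : SimpleGraph V)
    (a b : ℕ) (ha : 0 < a) (hb : 0 < b)
    (φ : V → Finset (Fin a)) (hcard : ∀ v, (φ v).card = b)
    (hproper : ∀ ℓ : Fin a, ∀ u w : V, G.Adj u w → ¬(ℓ ∈ φ u ∧ ℓ ∈ φ w))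
    (honce : ∀ v w : V, v ≠ w →
      b ≤ ((φ v \ φ w) ∪ (φ w \ φ v)).card) :
    (∀ v w : V, v ≠ w → ((φ v ∩ φ w).card : ℝ) ≤ b / 2) ∧
    (∀ x y z : V, y ≠ z → G.Adj x y → G.Adj x z →
      (5 : ℝ) * b / 2 ≤ ((φ x ∪ φ y ∪ φ z).card : ℝ)) := by
  have key : ∀ v w : V, v ≠ w → 2 * (φ v ∩ φ w).card ≤ b := by
    intro v w hvw
    have hd : Disjoint (φ v \ φ w) (φ w \ φ v) := disjoint_sdiff_sdiff
    have e1 := Finset.card_sdiff_add_card_inter (φ v) (φ w)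
    have e2 := Finset.card_sdiff_add_card_inter (φ w) (φ v)
    rw [Finset.inter_comm] at e2
    rw [hcard] at e1 e2
    have h1 : (φ v \ φ w).card = b - (φ v ∩ φ w).card := by omega
    have h2 : (φ w \ φ v).card = b - (φ v ∩ φ w).card := by omega
    have hi : (φ v ∩ φ w).card ≤ b := by
      rw [← hcard v]; exact Finset.card_le_card Finset.inter_subset_left
    have := honce v w hvw
    rw [Finset.card_union_of_disjoint hd, h1, h2] at this
    omega
  have part1 : ∀ v w : V, v ≠ w → ((φ v ∩ φ w).card : ℝ) ≤ b / 2 := by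
    intro v w hvw
    have := key v w hvw
    have : (2 * (φ v ∩ φ w).card : ℝ) ≤ (b : ℝ) := by exact_mod_cast this
    linarith
  refine ⟨part1, ?_⟩
  intro x y z hyz hxy hxz
  have hdxy : Disjoint (φ x) (φ y) := by
    rw [Finset.disjoint_left]; intro ℓ h1 h2; exact hproper ℓ x y hxy ⟨h1, h2⟩
  have hdxz : Disjoint (φ x) (φ z) := by
    rw [Finset.disjoint_left]; intro ℓ h1 h2; exact hproper ℓ x z hxz ⟨h1, h2⟩
  have hd : Disjoint (φ x) (φ y ∪ φ z) := by
    rw [Finset.disjoint_union_right]; exact ⟨hdxy, hdxz⟩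
  have hc : (φ x ∪ φ y ∪ φ z).card = b + (φ y ∪ φ z).card := by
    rw [Finset.union_assoc, Finset.card_union_of_disjoint hd, hcard]
  have hc2 : (φ y ∪ φ z).card + (φ y ∩ φ z).card = b + b := by
    rw [Finset.card_union_add_card_inter, hcard, hcard]
  have h1 := part1 y z hyz
  have : ((φ y ∪ φ z).card : ℝ) + ((φ y ∩ φ z).card : ℝ) = (b : ℝ) + b := by
    exact_mod_cast hc2
  rw [hc]
  push_cast
  linarith
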